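/- Let D ⊆ {(i,j) | 1 ≤ i < j ≤ n} be a closed set (if (i,j), (j,k) ∈ D then (i,k) ∈ D), g_D the span of matrix units E_{ij} for (i,j) ∈ D, and T a matrix supported on positions (j,i) with (i,j) ∈ D. The function ψ_T(g) = ψ(tr(T(g − I))) on the group G_D generated by the root subgroups {I + ξE_{ij} | (i,j) ∈ D} is a group homomorphism to ℂ× if and only if tr(T·X·Y) = 0 for all X, Y ∈ g_D, where ψ : F_q → ℂ× is a fixed nontrivial additive character. -/

import Mathlib

open Matrix

/-- For a pattern group `G_D = I + g_D` over `F_q` and `T` supported on the transposed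
positions of `D`, the function `ψ_T(g) = ψ(tr(T(g − I)))` is a homomorphism on `G_D`
if and only if `tr(T·X·Y) = 0` for all `X, Y ∈ g_D`. -/
theorem stmt10 {F : Type*} [Field F] [Fintype F] (n : ℕ) (D : Set (Fin n × Fin n))
    (hDpos : ∀ p ∈ D, p.1 < p.2)
    (hDclosed : ∀ i j k : Fin n, (i, j) ∈ D → (j, k) ∈ D → (i, k) ∈ D)
    (gD : Submodule F (Matrix (Fin n) (Fin n) F))
    (hgD : ∀ M : Matrix (Fin n) (Fin n) F, M ∈ gD ↔ ∀ i j : Fin n, (i, j) ∉ D → M i j = 0)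
    (T : Matrix (Fin n) (Fin n) F)
    (hT : ∀ i j : Fin n, (j, i) ∉ D → T i j = 0)
    (ψ : AddChar F ℂ) (hψ : ∃ x : F, ψ x ≠ 1) :
    (∀ g h : Matrix (Fin n) (Fin n) F, g - 1 ∈ gD → h - 1 ∈ gD →
        ψ (trace (T * (g * h - 1))) = ψ (trace (T * (g - 1))) * ψ (trace (T * (h - 1))))
      ↔ (∀ X ∈ gD, ∀ Y ∈ gD, trace (T * (X * Y)) = 0) := by
  have key : ∀ (g h : Matrix (Fin n) (Fin n) F),
      g * h - 1 = (g - 1) + (h - 1) + (g - 1) * (h - 1) := by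
    intro g h; noncomm_ring
  have trsplit : ∀ (X Y : Matrix (Fin n) (Fin n) F),
      trace (T * (X + Y + X * Y)) = trace (T * X) + trace (T * Y) + trace (T * (X * Y)) := by
    intro X Y
    rw [mul_add, mul_add, trace_add, trace_add]
  constructor
  · intro H
    -- first: ψ (trace (T * (X*Y))) = 1 for X, Y ∈ gD
    have h1 : ∀ X ∈ gD, ∀ Y ∈ gD, ψ (trace (T * (X * Y))) = 1 := by
      intro X hX Y hY
      have hX' : (1 + X) - 1 ∈ gD := by simpa using hX
      have hY' : (1 + Y) - 1 ∈ gD := by simpa using hY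
      have := H (1 + X) (1 + Y) hX' hY'
      rw [key] at this
      simp only [add_sub_cancel_left] at this
      rw [trsplit, ψ.map_add_eq_mul, ψ.map_add_eq_mul] at this
      have hψne : ∀ a : F, (ψ a : ℂ) ≠ 0 := by
        intro a ha
        have h0 : (1 : ℂ) = 0 := by
          rw [← ψ.map_zero_eq_one, show (0 : F) = a + (-a) by ring, ψ.map_add_eq_mul, ha,
            zero_mul]
        exact one_ne_zero h0
      have hne : ψ (trace (T * X)) * ψ (trace (T * Y)) ≠ 0 :=
        mul_ne_zero (hψne _) (hψne _)
      field_simp at this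
      calc ψ (trace (T * (X * Y)))
          = (ψ (trace (T * X)) * ψ (trace (T * Y)) * ψ (trace (T * (X * Y)))) /
            (ψ (trace (T * X)) * ψ (trace (T * Y))) := by
            rw [mul_div_cancel_left₀ _ hne]
        _ = 1 := by rw [this, div_self hne]
    intro X hX Y hY
    by_contra hne
    obtain ⟨x, hx⟩ := hψ
    apply hx
    have hsm : (x * (trace (T * (X * Y)))⁻¹) • X ∈ gD := gD.smul_mem _ hX
    have := h1 _ hsm Y hY
    rw [smul_mul_assoc, Matrix.mul_smul, trace_smul, smul_eq_mul,
      mul_assoc, inv_mul_cancel₀ hne, mul_one] at this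
    exact this
  · intro H g h hg hh
    rw [key, trsplit, H _ hg _ hh, add_zero, ψ.map_add_eq_mul]
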